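/- Let x ∈ ℝ^{d×r} have full column rank with thin singular value decomposition x = USVᵀ and polar factor x' = UVᵀ (so x' ∈ St(d,r)). Then for every matrix g ∈ ℝ^{d×r}, ⟨g − x'·sym(x'ᵀg), x − x'⟩ = 0. In particular, for any function f differentiable at x', ⟨∇𝓛(x'), x − x'⟩ = 0, where ∇𝓛(x') = ∇f(x') − x'·sym(x'ᵀ∇f(x')) is the gradient of the merit function at the on-manifold point x'. -/

import Mathlib

open Matrix BigOperators Finset

noncomputable section

namespace DRFGT

/-- Frobenius inner product `⟨A, B⟩ = Tr (A Bᵀ)`. -/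
def finner {m k : Type*} [Fintype m] [Fintype k] (A B : Matrix m k ℝ) : ℝ :=
  Matrix.trace (A * Bᵀ)

/-- Frobenius norm `‖A‖_F = √⟨A, A⟩`. -/
def fnorm {m k : Type*} [Fintype m] [Fintype k] (A : Matrix m k ℝ) : ℝ :=
  Real.sqrt (finner A A)

/-- Skew part of a square matrix, `skew(A) = (A − Aᵀ)/2`. -/
def mskew {m : Type*} [Fintype m] (A : Matrix m m ℝ) : Matrix m m ℝ :=
  (2 : ℝ)⁻¹ • (A - Aᵀ)

/-- Symmetric part of a square matrix, `sym(A) = (A + Aᵀ)/2`. -/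
def msym {m : Type*} [Fintype m] (A : Matrix m m ℝ) : Matrix m m ℝ :=
  (2 : ℝ)⁻¹ • (A + Aᵀ)

/-- Relative (Riemannian) gradient `grad f(x) = skew(∇f(x) xᵀ) x`, where `Df` denotes the
Euclidean gradient `∇f` of `f`. -/
def rgrad {d r : ℕ} (Df : Matrix (Fin d) (Fin r) ℝ → Matrix (Fin d) (Fin r) ℝ)
    (x : Matrix (Fin d) (Fin r) ℝ) : Matrix (Fin d) (Fin r) ℝ :=
  mskew (Df x * xᵀ) * x

/-- Landing field `Λ(x) = grad f(x) + λ x (xᵀ x − I_r)`. -/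
def landing {d r : ℕ} (Df : Matrix (Fin d) (Fin r) ℝ → Matrix (Fin d) (Fin r) ℝ) (lam : ℝ)
    (x : Matrix (Fin d) (Fin r) ℝ) : Matrix (Fin d) (Fin r) ℝ :=
  rgrad Df x + lam • (x * (xᵀ * x - 1))

/-- The Stiefel manifold `St(d,r) = {x : xᵀ x = I_r}`. -/
def St (d r : ℕ) : Set (Matrix (Fin d) (Fin r) ℝ) := {x | xᵀ * x = 1}

/-- The safety region `St(d,r)^ε = {x : ‖xᵀ x − I_r‖_F ≤ ε}`. -/
def StEps (d r : ℕ) (ε : ℝ) : Set (Matrix (Fin d) (Fin r) ℝ) :=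
  {x | fnorm (xᵀ * x - 1) ≤ ε}

/-- The merit function `𝓛(x) = f(x) − ½⟨sym(xᵀ∇f(x)), xᵀx − I_r⟩ + γ·¼‖xᵀx − I_r‖_F²`. -/
def merit {d r : ℕ} (f : Matrix (Fin d) (Fin r) ℝ → ℝ)
    (Df : Matrix (Fin d) (Fin r) ℝ → Matrix (Fin d) (Fin r) ℝ) (γ : ℝ)
    (x : Matrix (Fin d) (Fin r) ℝ) : ℝ :=
  f x - (2 : ℝ)⁻¹ * finner (msym (xᵀ * Df x)) (xᵀ * x - 1)
    + γ * (4 : ℝ)⁻¹ * fnorm (xᵀ * x - 1) ^ 2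

/-- The gradient of the merit function at on-manifold points:
`∇𝓛(x) = ∇f(x) − x · sym(xᵀ∇f(x))` for `x ∈ St(d,r)`. -/
def meritGradSt {d r : ℕ} (Df : Matrix (Fin d) (Fin r) ℝ → Matrix (Fin d) (Fin r) ℝ)
    (x : Matrix (Fin d) (Fin r) ℝ) : Matrix (Fin d) (Fin r) ℝ :=
  Df x - x * msym (xᵀ * Df x)

/-- `x'` is the polar factor of a full-column-rank `x`, i.e. the projection `Proj_St(x)` of `x`
onto the Stiefel manifold: if `x = U S Vᵀ` is a thin SVD then `x' = U Vᵀ`, equivalently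
`x'ᵀ x' = I_r` and `x = x' P` for a positive definite `P` (namely `P = V S Vᵀ`). -/
def IsPolarFactor {d r : ℕ} (x x' : Matrix (Fin d) (Fin r) ℝ) : Prop :=
  x'ᵀ * x' = 1 ∧ ∃ P : Matrix (Fin r) (Fin r) ℝ, P.PosDef ∧ x = x' * P

/-- Frobenius distance from `x` to a set `S`: `dist(S,x) = inf_{y ∈ S} ‖x − y‖_F`. -/
def fdist {d r : ℕ} (S : Set (Matrix (Fin d) (Fin r) ℝ)) (x : Matrix (Fin d) (Fin r) ℝ) : ℝ :=
  sInf ((fun y => fnorm (x - y)) '' S)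

/-- Network average `z̄ = (1/n) Σᵢ zᵢ`. -/
def avg {n d r : ℕ} (z : Fin n → Matrix (Fin d) (Fin r) ℝ) : Matrix (Fin d) (Fin r) ℝ :=
  (n : ℝ)⁻¹ • ∑ i, z i

/-- Frobenius norm of a stacked family: `‖𝐳‖_F = (Σᵢ ‖zᵢ‖_F²)^{1/2}`. -/
def snorm {n d r : ℕ} (z : Fin n → Matrix (Fin d) (Fin r) ℝ) : ℝ :=
  Real.sqrt (∑ i, fnorm (z i) ^ 2)


/-- Let `x` have full column rank with polar factor `x' = Proj_St(x)`
(i.e. `x' = U Vᵀ` for a thin SVD `x = U S Vᵀ`). Then for every matrix `g`,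
`⟨g − x'·sym(x'ᵀ g), x − x'⟩ = 0`. In particular, for any `f` differentiable at `x'` with
Euclidean gradient `Df`, `⟨∇𝓛(x'), x − x'⟩ = 0` where
`∇𝓛(x') = ∇f(x') − x'·sym(x'ᵀ∇f(x'))`. -/
theorem meritGrad_orthogonal_to_normal_error {d r : ℕ}
    (x x' : Matrix (Fin d) (Fin r) ℝ) (hpf : IsPolarFactor x x') :
    (∀ g : Matrix (Fin d) (Fin r) ℝ, finner (g - x' * msym (x'ᵀ * g)) (x - x') = 0) ∧
      (∀ Df : Matrix (Fin d) (Fin r) ℝ → Matrix (Fin d) (Fin r) ℝ,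
        finner (meritGradSt Df x') (x - x') = 0) := by
  obtain ⟨h1, P, hP, hx⟩ := hpf
  have hPsym : Pᵀ = P := by
    have := hP.1
    simpa [Matrix.IsHermitian, Matrix.conjTranspose_eq_transpose_of_trivial] using this
  have key : ∀ g : Matrix (Fin d) (Fin r) ℝ,
      finner (g - x' * msym (x'ᵀ * g)) (x - x') = 0 := by
    intro g
    have hxx' : x - x' = x' * (P - 1) := by
      rw [hx]; rw [Matrix.mul_sub, Matrix.mul_one]
    rw [finner, hxx']
    have htrans : (x' * (P - 1))ᵀ = (P - 1) * x'ᵀ := by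
      rw [Matrix.transpose_mul, Matrix.transpose_sub, hPsym, Matrix.transpose_one]
    rw [htrans]
    have : (g - x' * msym (x'ᵀ * g)) * ((P - 1) * x'ᵀ)
        = g * ((P - 1) * x'ᵀ) - x' * (msym (x'ᵀ * g) * ((P - 1) * x'ᵀ)) := by
      rw [Matrix.sub_mul, Matrix.mul_assoc]
    rw [this, Matrix.trace_sub]
    rw [Matrix.trace_mul_comm x' (msym (x'ᵀ * g) * ((P - 1) * x'ᵀ))]
    have h2 : msym (x'ᵀ * g) * ((P - 1) * x'ᵀ) * x' = msym (x'ᵀ * g) * (P - 1) := by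
      rw [Matrix.mul_assoc, Matrix.mul_assoc, h1, Matrix.mul_one]
    rw [h2]
    have h3 : Matrix.trace (g * ((P - 1) * x'ᵀ)) = Matrix.trace (x'ᵀ * g * (P - 1)) := by
      rw [← Matrix.mul_assoc]
      exact Matrix.trace_mul_cycle g (P - 1) x'ᵀ
    rw [h3]
    have hfac : x'ᵀ * g - msym (x'ᵀ * g) = mskew (x'ᵀ * g) := by
      ext i j
      simp [msym, mskew, Matrix.sub_apply, Matrix.add_apply, Matrix.smul_apply]
      ring
    have h4 : Matrix.trace (x'ᵀ * g * (P - 1)) - Matrix.trace (msym (x'ᵀ * g) * (P - 1))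
        = Matrix.trace (mskew (x'ᵀ * g) * (P - 1)) := by
      rw [← Matrix.trace_sub, ← Matrix.sub_mul, hfac]
    rw [h4]
    -- trace of skew * symmetric = 0
    set A := mskew (x'ᵀ * g) with hA
    have hAskew : Aᵀ = -A := by
      simp [hA, mskew, Matrix.transpose_smul, Matrix.transpose_sub]
      ext i j
      simp [Matrix.smul_apply, Matrix.sub_apply, Matrix.neg_apply]
      ring
    have hSsym : (P - 1)ᵀ = P - 1 := by
      rw [Matrix.transpose_sub, hPsym, Matrix.transpose_one]
    have : Matrix.trace (A * (P - 1)) = -Matrix.trace (A * (P - 1)) := by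
      conv_lhs => rw [← Matrix.trace_transpose, Matrix.transpose_mul, hSsym, hAskew,
        Matrix.mul_neg, Matrix.trace_neg, Matrix.trace_mul_comm]
    linarith
  exact ⟨key, fun Df => key (Df x')⟩

end DRFGT
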